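/- Let Γ act minimally on a Cantor space 𝔛 and let U ⊆ 𝔛 be a nonempty clopen adapted set. Then the stabilizer subgroup Γ_U = {g ∈ Γ | g·U ∩ U ≠ ∅} has finite index in Γ, and the translates {g·U | g ∈ Γ} form a finite partition of 𝔛 into clopen sets in bijection with the coset space Γ/Γ_U. -/

import Mathlib

open Pointwise

theorem stmt1 {X : Type*} [MetricSpace X] [CompactSpace X]
    [TotallyDisconnectedSpace X] (hperf : Perfect (Set.univ : Set X))
    {G : Type*} [Group G] [MulAction G X]
    (hc : ∀ g : G, Continuous fun x : X => g • x)
    (hmin : ∀ x : X, Dense (MulAction.orbit G x))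
    (U : Set X) (hne : U.Nonempty) (hcl : IsClopen U)
    (hadapt : ∀ g : G, ((g • U) ∩ U).Nonempty → g • U = U) :
    (MulAction.stabilizer G U).FiniteIndex ∧
    (∀ g : G, IsClopen (g • U)) ∧
    (∀ x : X, ∃! V : Set X, (∃ g : G, V = g • U) ∧ x ∈ V) ∧
    {V : Set X | ∃ g : G, V = g • U}.Finite ∧
    Nonempty ({V : Set X | ∃ g : G, V = g • U} ≃ (G ⧸ MulAction.stabilizer G U)) := by
  -- translates are clopen
  have hclop : ∀ g : G, IsClopen (g • U) := by
    intro g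
    have h : g • U = (fun x : X => g⁻¹ • x) ⁻¹' U := by
      ext x
      simp [Set.mem_smul_set_iff_inv_smul_mem]
    rw [h]
    exact hcl.preimage (hc g⁻¹)
  -- translates cover X
  have hcover : ∀ x : X, ∃ g : G, x ∈ g • U := by
    intro x
    obtain ⟨y, hyo, hyU⟩ := (hmin x).exists_mem_open hcl.2 hne
    obtain ⟨g, rfl⟩ := hyo
    exact ⟨g⁻¹, Set.mem_smul_set_iff_inv_smul_mem.2 (by simpa using hyU)⟩
  -- translates are pairwise equal or disjoint
  have hdisj : ∀ g h : G, ((g • U) ∩ (h • U)).Nonempty → g • U = h • U := by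
    intro g h ⟨x, hxg, hxh⟩
    have h1 : ((h⁻¹ * g) • U ∩ U).Nonempty := by
      refine ⟨h⁻¹ • x, ?_, ?_⟩
      · rw [mul_smul]; exact Set.smul_mem_smul_set hxg
      · obtain ⟨u, hu, rfl⟩ := hxh
        simpa using hu
    have h2 := hadapt _ h1
    calc g • U = h • (h⁻¹ * g) • U := by rw [smul_smul, mul_inv_cancel_left]
    _ = h • U := by rw [h2]
  -- nonempty translates
  have hneT : ∀ g : G, (g • U).Nonempty := fun g => hne.smul_set
  -- finiteness
  obtain ⟨s, hs⟩ := IsCompact.elim_finite_subcover isCompact_univ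
    (fun g : G => g • U) (fun g => (hclop g).2) (fun x _ => Set.mem_iUnion.2 (hcover x))
  have hfin : {V : Set X | ∃ g : G, V = g • U}.Finite := by
    apply Set.Finite.subset (Set.Finite.image (fun g : G => g • U) s.finite_toSet)
    rintro V ⟨g, rfl⟩
    obtain ⟨x, hx⟩ := hneT g
    have := hs (Set.mem_univ x)
    simp only [Set.mem_iUnion] at this
    obtain ⟨h, hhs, hxh⟩ := this
    exact ⟨h, hhs, (hdisj h g ⟨x, hxh, hx⟩)⟩
  -- equiv with quotient
  have hsets : {V : Set X | ∃ g : G, V = g • U} = MulAction.orbit G U := by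
    ext V
    simp [MulAction.mem_orbit_iff, eq_comm]
  have hequiv : Nonempty ({V : Set X | ∃ g : G, V = g • U} ≃ (G ⧸ MulAction.stabilizer G U)) :=
    ⟨(Equiv.setCongr hsets).trans (MulAction.orbitEquivQuotientStabilizer G U)⟩
  -- finite index
  have hfinq : Finite (G ⧸ MulAction.stabilizer G U) := by
    obtain ⟨e⟩ := hequiv
    have : Finite {V : Set X | ∃ g : G, V = g • U} := hfin.to_subtype
    exact Finite.of_equiv _ e
  refine ⟨Subgroup.finiteIndex_of_finite_quotient, hclop, ?_, hfin, hequiv⟩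
  intro x
  obtain ⟨g, hg⟩ := hcover x
  refine ⟨g • U, ⟨⟨g, rfl⟩, hg⟩, ?_⟩
  rintro V ⟨⟨h, rfl⟩, hxV⟩
  exact hdisj h g ⟨x, hxV, hg⟩
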